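/- Let G be a finite simple graph, ℓ ≥ 1 an integer, α ≥ 1 and L > 0 real numbers. Assume: (a) G is ℓ-tangle-free; (b) for every cycle 𝒞 of G and every t ∈ {0, …, ℓ}, the number of vertices v with d(v, 𝒞) = t is at most L·α^t; (c) the sets V_𝒞 = {v : d(v, 𝒞) ≤ ℓ} are pairwise disjoint as 𝒞 ranges over the cycles of G. Then the spectral radius of B^(ℓ) − D^(ℓ) is at most (ℓ+1)·L·α^{ℓ/2}. -/

import Mathlib

/-- The spectral radius of a real symmetric matrix, defined (equivalently) as the ℓ2
operator norm of the induced operator on Euclidean space. -/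
noncomputable def specRad {n : Type*} [Fintype n] [DecidableEq n]
    (A : Matrix n n ℝ) : ℝ :=
  ‖Matrix.toEuclideanCLM (𝕜 := ℝ) A‖

/-- The `(i,j)` entry of the path expansion matrix `B^(ℓ)`: the number of self-avoiding
paths of length `ℓ` from `i` to `j`. -/
noncomputable def pathCount {V : Type*} (G : SimpleGraph V) (ℓ : ℕ) (i j : V) : ℕ :=
  Set.ncard {p : G.Walk i j | p.IsPath ∧ p.length = ℓ}

/-- The distance (in `ℕ∞`) from a vertex `v` to a set `S` of vertices. -/
noncomputable def edistToSet {V : Type*} (G : SimpleGraph V) (S : Set V) (v : V) : ℕ∞ :=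
  ⨅ w ∈ S, G.edist v w

/-- A graph is `ℓ`-tangle-free if, for every vertex `v`, any two cycles all of whose
vertices lie at graph distance at most `ℓ` from `v` have the same edge set. -/
def TangleFree {V : Type*} [DecidableEq V] (G : SimpleGraph V) (ℓ : ℕ) : Prop :=
  ∀ (v a b : V) (c₁ : G.Walk a a) (c₂ : G.Walk b b),
    c₁.IsCycle → c₂.IsCycle →
    (∀ w ∈ c₁.support, G.edist v w ≤ (ℓ : ℕ∞)) →
    (∀ w ∈ c₂.support, G.edist v w ≤ (ℓ : ℕ∞)) →
    c₁.edges.toFinset = c₂.edges.toFinset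


section AuxProof

open SimpleGraph Walk
variable {V : Type*}

variable {V : Type*}

/-- Every vertex of a walk of positive length lies on one of its edges. -/
lemma aux_mem_edge_of_mem_support {G : SimpleGraph V} {u v w : V} (p : G.Walk u v)
    (hlen : p.length ≠ 0) (hw : w ∈ p.support) : ∃ e ∈ p.edges, w ∈ e := by
  induction p with
  | nil => simp at hlen
  | @cons a b c h q ih =>
    rw [Walk.support_cons] at hw
    rcases List.mem_cons.mp hw with rfl | hw
    · exact ⟨s(w, b), by simp, by simp⟩
    · rcases Nat.eq_zero_or_pos q.length with hq0 | hq0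
      · cases q with
        | nil =>
          simp only [Walk.support_nil, List.mem_singleton] at hw
          subst hw
          exact ⟨s(a, w), by simp, by simp⟩
        | cons h' q' => simp at hq0
      · obtain ⟨e, he, hwe⟩ := ih (Nat.pos_iff_ne_zero.mp hq0) hw
        exact ⟨e, by simp [he], hwe⟩

lemma aux_edist_add_edist_le {G : SimpleGraph V} {u v w : V} (p : G.Walk u v)
    (hw : w ∈ p.support) :
    G.edist u w + G.edist w v ≤ (p.length : ℕ∞) := by
  classical
  have hspec := p.take_spec hw
  have hlen : (p.takeUntil w hw).length + (p.dropUntil w hw).length = p.length := by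
    have := congrArg Walk.length hspec
    rwa [Walk.length_append] at this
  calc G.edist u w + G.edist w v
      ≤ ((p.takeUntil w hw).length : ℕ∞) + ((p.dropUntil w hw).length : ℕ∞) :=
        add_le_add (SimpleGraph.edist_le _) (SimpleGraph.edist_le _)
    _ = (p.length : ℕ∞) := by rw [← Nat.cast_add, hlen]

/-- crossing lemma -/
lemma aux_crossing {G : SimpleGraph V} {u v : V} (τ : G.Walk u v) (S₁ S₂ : Set V)
    (hS : ∀ w ∈ τ.support, w ∈ S₁ ∨ w ∈ S₂)
    (hdisj : ∀ w, w ∈ S₁ → w ∈ S₂ → False)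
    (hu : u ∈ S₁) (hv : v ∈ S₂) :
    ∃ w₁ w₂, w₁ ∈ S₁ ∧ w₂ ∈ S₂ ∧ s(w₁, w₂) ∈ τ.edges := by
  induction τ with
  | nil => exact (hdisj _ hu hv).elim
  | @cons a b c h q ih =>
    rcases hS b (by simp) with hb | hb
    · obtain ⟨w₁, w₂, h1, h2, he⟩ := ih (fun w hw => hS w (by simp [hw])) hb hv
      exact ⟨w₁, w₂, h1, h2, by simp [he]⟩
    · exact ⟨a, b, hu, hb, by simp⟩

/-- split a walk at an edge -/
lemma aux_split_at_edge {G : SimpleGraph V} {x y u v : V} (p : G.Walk x y)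
    (he : s(u, v) ∈ p.edges) :
    (∃ (a : G.Walk x u) (h : G.Adj u v) (b : G.Walk v y), p = a.append (Walk.cons h b)) ∨
    (∃ (a : G.Walk x v) (h : G.Adj v u) (b : G.Walk u y), p = a.append (Walk.cons h b)) := by
  induction p with
  | nil => simp at he
  | @cons a b c h q ih =>
    rw [Walk.edges_cons, List.mem_cons] at he
    rcases he with he | he
    · rw [Sym2.eq_iff] at he
      rcases he with ⟨rfl, rfl⟩ | ⟨rfl, rfl⟩
      · exact Or.inl ⟨Walk.nil, h, q, by simp⟩
      · exact Or.inr ⟨Walk.nil, h, q, by simp⟩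
    · rcases ih he with ⟨a', h', b', rfl⟩ | ⟨a', h', b', rfl⟩
      · exact Or.inl ⟨Walk.cons h a', h', b', by simp⟩
      · exact Or.inr ⟨Walk.cons h a', h', b', by simp⟩

/-- From two distinct paths with the same endpoints, extract a cycle supported in their union. -/
lemma aux_cycle_of_two_paths {G : SimpleGraph V} {x y : V} (p q : G.Walk x y)
    (hp : p.IsPath) (hq : q.IsPath) (hne : p ≠ q) :
    ∃ (a : V) (c : G.Walk a a), c.IsCycle ∧
      ∀ w ∈ c.support, w ∈ p.support ∨ w ∈ q.support := by
  classical
  set H : G.Subgraph := p.toSubgraph ⊔ q.toSubgraph with hH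
  set Γ : SimpleGraph V := H.spanningCoe with hΓ
  have hpe : ∀ e ∈ p.edges, e ∈ Γ.edgeSet := by
    intro e he
    have : e ∈ H.edgeSet := by
      rw [hH, SimpleGraph.Subgraph.edgeSet_sup]
      exact Or.inl (p.mem_edges_toSubgraph.mpr he)
    exact this
  have hqe : ∀ e ∈ q.edges, e ∈ Γ.edgeSet := by
    intro e he
    have : e ∈ H.edgeSet := by
      rw [hH, SimpleGraph.Subgraph.edgeSet_sup]
      exact Or.inr (q.mem_edges_toSubgraph.mpr he)
    exact this
  by_cases hac : Γ.IsAcyclic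
  · exfalso
    have h1 : (⟨p.transfer Γ hpe, hp.transfer hpe⟩ : Γ.Path x y)
        = ⟨q.transfer Γ hqe, hq.transfer hqe⟩ := hac.path_unique _ _
    have h2 : p.transfer Γ hpe = q.transfer Γ hqe := congrArg Subtype.val h1
    have h3 := congrArg (fun w : Γ.Walk x y => w.transfer G
      (fun e he => by
        have := w.edges_subset_edgeSet he
        exact SimpleGraph.edgeSet_mono H.spanningCoe_le this)) h2
    exact hne (by simpa [Walk.transfer_transfer, Walk.transfer_self] using h3)
  · rw [SimpleGraph.IsAcyclic] at hac
    push_neg at hac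
    obtain ⟨a, c', hc'⟩ := hac
    have hce : ∀ e ∈ c'.edges, e ∈ G.edgeSet := fun e he =>
      SimpleGraph.edgeSet_mono H.spanningCoe_le (c'.edges_subset_edgeSet he)
    refine ⟨a, c'.transfer G hce, hc'.transfer hce, ?_⟩
    intro w hw
    rw [Walk.support_transfer] at hw
    have hlen : c'.length ≠ 0 := by
      have := hc'.three_le_length
      omega
    obtain ⟨e, hec, hwe⟩ := aux_mem_edge_of_mem_support c' hlen hw
    have heΓ : e ∈ Γ.edgeSet := c'.edges_subset_edgeSet hec
    induction e with
    | h a' b' =>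
      have hadj : H.Adj a' b' := heΓ
      rw [hH, SimpleGraph.Subgraph.sup_adj] at hadj
      rcases Sym2.mem_iff.mp hwe with rfl | rfl
      · rcases hadj with h' | h'
        · exact Or.inl (p.mem_verts_toSubgraph.mp h'.fst_mem)
        · exact Or.inr (q.mem_verts_toSubgraph.mp h'.fst_mem)
      · rcases hadj with h' | h'
        · exact Or.inl (p.mem_verts_toSubgraph.mp h'.snd_mem)
        · exact Or.inr (q.mem_verts_toSubgraph.mp h'.snd_mem)
/-- Two paths through a forest using a common edge in opposite directions cannot exist. -/
lemma aux_no_opposite {F : SimpleGraph V} (hF : F.IsAcyclic) {i j u v : V}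
    (a : F.Walk i u) (b : F.Walk v j) (a' : F.Walk i v) (b' : F.Walk u j)
    (hab : ∀ w, w ∈ a.support → w ∈ b.support → False)
    (ha'b' : ∀ w, w ∈ a'.support → w ∈ b'.support → False) : False := by
  classical
  set τ : F.Walk u v := (a.reverse.append a').bypass with hτdef
  set σ : F.Walk u v := (b'.append b.reverse).bypass with hσdef
  have hτσ : τ = σ :=
    congrArg Subtype.val (hF.path_unique ⟨τ, Walk.bypass_isPath _⟩ ⟨σ, Walk.bypass_isPath _⟩)
  have hmem1 : ∀ w ∈ τ.support, w ∈ a.support ∨ w ∈ a'.support := by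
    intro w hw
    have h1 := Walk.support_bypass_subset _ hw
    rw [Walk.support_append] at h1
    rcases List.mem_append.mp h1 with h2 | h2
    · rw [Walk.support_reverse, List.mem_reverse] at h2
      exact Or.inl h2
    · exact Or.inr (List.mem_of_mem_tail h2)
  have hmem2 : ∀ w ∈ τ.support, w ∈ b'.support ∨ w ∈ b.support := by
    intro w hw
    rw [hτσ] at hw
    have h1 := Walk.support_bypass_subset _ hw
    rw [Walk.support_append] at h1
    rcases List.mem_append.mp h1 with h2 | h2
    · exact Or.inl h2
    · right
      have h3 := List.mem_of_mem_tail h2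
      rwa [Walk.support_reverse, List.mem_reverse] at h3
  obtain ⟨w₁, w₂, hw₁, hw₂, hedge⟩ :=
    aux_crossing τ {w | w ∈ a.support ∧ w ∈ b'.support} {w | w ∈ a'.support ∧ w ∈ b.support}
      (by
        intro w hw
        rcases hmem1 w hw with h1 | h1 <;> rcases hmem2 w hw with h2 | h2
        · exact Or.inl ⟨h1, h2⟩
        · exact (hab w h1 h2).elim
        · exact (ha'b' w h1 h2).elim
        · exact Or.inr ⟨h1, h2⟩)
      (by
        rintro w ⟨hw1, -⟩ ⟨-, hw2⟩
        exact hab w hw1 hw2)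
      ⟨a.end_mem_support, b'.start_mem_support⟩
      ⟨a'.end_mem_support, b.start_mem_support⟩
  have hedge2 := Walk.edges_bypass_subset _ hedge
  rw [Walk.edges_append] at hedge2
  rcases List.mem_append.mp hedge2 with h2 | h2
  · rw [Walk.edges_reverse, List.mem_reverse] at h2
    exact hab w₂ (a.snd_mem_support_of_mem_edges h2) hw₂.2
  · exact ha'b' w₁ (a'.fst_mem_support_of_mem_edges h2) hw₁.2

section DeleteEdge

variable {Γ : SimpleGraph V} {e : Sym2 V}

private lemma notMem_singleton_of_ne {l : List (Sym2 V)} (h : e ∉ l) :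
    ∀ f ∈ l, f ∉ ({e} : Set (Sym2 V)) := by
  intro f hf hfe
  rw [Set.mem_singleton_iff] at hfe
  exact h (hfe ▸ hf)

/-- In a graph whose `e`-deleted graph is a forest, two paths avoiding `e` with the
same endpoints are equal. -/
lemma aux_avoid_eq (hFac : (Γ.deleteEdges {e}).IsAcyclic) {x y : V}
    (q q' : Γ.Walk x y) (hq : q.IsPath) (hq' : q'.IsPath)
    (h1 : e ∉ q.edges) (h2 : e ∉ q'.edges) : q = q' := by
  have hr :=
    hFac.path_unique ⟨q.toDeleteEdges {e} (notMem_singleton_of_ne h1), by apply Walk.IsPath.toDeleteEdges _ _ hq⟩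
      ⟨q'.toDeleteEdges {e} (notMem_singleton_of_ne h2), by apply Walk.IsPath.toDeleteEdges _ _ hq'⟩
  have hr2 := congrArg Subtype.val hr
  have h3 := congrArg (fun w : (Γ.deleteEdges {e}).Walk x y => w.transfer Γ
    (fun f hf => SimpleGraph.edgeSet_mono (SimpleGraph.deleteEdges_le _)
      (w.edges_subset_edgeSet hf))) hr2
  simpa [Walk.toDeleteEdges, Walk.transfer_transfer, Walk.transfer_self] using h3

lemma aux_edges_split {x y u v : V} (a : Γ.Walk x u) (h : Γ.Adj u v) (b : Γ.Walk v y)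
    (hq : (a.append (Walk.cons h b)).IsPath) (he : e = s(u, v)) :
    e ∉ a.edges ∧ e ∉ b.edges ∧ (∀ w, w ∈ a.support → w ∈ b.support → False) := by
  have hnd := hq.isTrail.edges_nodup
  rw [Walk.edges_append, Walk.edges_cons] at hnd
  have hdisj := List.disjoint_of_nodup_append hnd
  have hnd2 := (List.nodup_append.mp hnd).2.1
  refine ⟨fun hc => hdisj (he ▸ hc) List.mem_cons_self, ?_, ?_⟩
  · rw [List.nodup_cons] at hnd2
    exact fun hc => hnd2.1 (he ▸ hc)
  · have hsup := hq.support_nodup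
    rw [Walk.support_append, Walk.support_cons] at hsup
    have := List.disjoint_of_nodup_append hsup
    exact fun w hw1 hw2 => this hw1 (by simpa using hw2)

/-- Same-direction decompositions give equal paths. -/
lemma aux_samedir (hFac : (Γ.deleteEdges {e}).IsAcyclic) {x y u v : V}
    (a a₂ : Γ.Walk x u) (h : Γ.Adj u v) (h₂ : Γ.Adj u v) (b b₂ : Γ.Walk v y)
    (hq : (a.append (Walk.cons h b)).IsPath) (hq₂ : (a₂.append (Walk.cons h₂ b₂)).IsPath)
    (he : e = s(u, v)) :
    a.append (Walk.cons h b) = a₂.append (Walk.cons h₂ b₂) := by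
  obtain ⟨hea, heb, -⟩ := aux_edges_split a h b hq he
  obtain ⟨hea₂, heb₂, -⟩ := aux_edges_split a₂ h₂ b₂ hq₂ he
  have ha : a = a₂ := aux_avoid_eq hFac a a₂ hq.of_append_left hq₂.of_append_left hea hea₂
  have hb : b = b₂ := aux_avoid_eq hFac b b₂ hq.of_append_right.of_cons hq₂.of_append_right.of_cons
    heb heb₂
  subst ha; subst hb; rfl

/-- Opposite-direction decompositions are contradictory. -/
lemma aux_oppdir (hFac : (Γ.deleteEdges {e}).IsAcyclic) {x y u v : V}
    (a : Γ.Walk x u) (h : Γ.Adj u v) (b : Γ.Walk v y)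
    (a' : Γ.Walk x v) (h' : Γ.Adj v u) (b' : Γ.Walk u y)
    (hq : (a.append (Walk.cons h b)).IsPath) (hq' : (a'.append (Walk.cons h' b')).IsPath)
    (he : e = s(u, v)) : False := by
  obtain ⟨hea, heb, hab⟩ := aux_edges_split a h b hq he
  obtain ⟨hea', heb', hab'⟩ := aux_edges_split a' h' b' hq' (show e = s(v,u) by rw [he, Sym2.eq_swap])
  refine aux_no_opposite hFac
    (a.toDeleteEdges {e} (notMem_singleton_of_ne hea))
    (b.toDeleteEdges {e} (notMem_singleton_of_ne heb))
    (a'.toDeleteEdges {e} (notMem_singleton_of_ne hea'))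
    (b'.toDeleteEdges {e} (notMem_singleton_of_ne heb')) ?_ ?_ <;>
    · intro w hw1 hw2
      rw [Walk.toDeleteEdges, Walk.support_transfer] at hw1 hw2
      first
        | exact hab w hw1 hw2
        | exact hab' w hw1 hw2

end DeleteEdge
/-- Three pairwise distinct paths with the same endpoints force two cycles (supported in
the union of the paths) with different edge sets. -/
lemma aux_three_paths [DecidableEq V] {G : SimpleGraph V} {x y : V} (p₁ p₂ p₃ : G.Walk x y)
    (h1 : p₁.IsPath) (h2 : p₂.IsPath) (h3 : p₃.IsPath)
    (d12 : p₁ ≠ p₂) (d13 : p₁ ≠ p₃) (d23 : p₂ ≠ p₃)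
    (hcyc : ∀ (av bv : V) (c : G.Walk av av) (c' : G.Walk bv bv), c.IsCycle → c'.IsCycle →
      (∀ w ∈ c.support, w ∈ p₁.support ∨ w ∈ p₂.support ∨ w ∈ p₃.support) →
      (∀ w ∈ c'.support, w ∈ p₁.support ∨ w ∈ p₂.support ∨ w ∈ p₃.support) →
      c.edges.toFinset = c'.edges.toFinset) : False := by
  classical
  set H : G.Subgraph := p₁.toSubgraph ⊔ p₂.toSubgraph ⊔ p₃.toSubgraph with hH
  set Γ : SimpleGraph V := H.spanningCoe with hΓdef
  have hpe1 : ∀ f ∈ p₁.edges, f ∈ Γ.edgeSet := by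
    intro f hf
    have hf2 : f ∈ H.edgeSet := by
      rw [hH, SimpleGraph.Subgraph.edgeSet_sup, SimpleGraph.Subgraph.edgeSet_sup]
      exact Or.inl (Or.inl (p₁.mem_edges_toSubgraph.mpr hf))
    exact hf2
  have hpe2 : ∀ f ∈ p₂.edges, f ∈ Γ.edgeSet := by
    intro f hf
    have hf2 : f ∈ H.edgeSet := by
      rw [hH, SimpleGraph.Subgraph.edgeSet_sup, SimpleGraph.Subgraph.edgeSet_sup]
      exact Or.inl (Or.inr (p₂.mem_edges_toSubgraph.mpr hf))
    exact hf2
  have hpe3 : ∀ f ∈ p₃.edges, f ∈ Γ.edgeSet := by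
    intro f hf
    have hf2 : f ∈ H.edgeSet := by
      rw [hH, SimpleGraph.Subgraph.edgeSet_sup]
      exact Or.inr (p₃.mem_edges_toSubgraph.mpr hf)
    exact hf2
  have hΓG : ∀ f ∈ Γ.edgeSet, f ∈ G.edgeSet := fun f hf =>
    SimpleGraph.edgeSet_mono H.spanningCoe_le hf
  -- incidence helper
  have hinc : ∀ w : V, ∀ f ∈ Γ.edgeSet, w ∈ f →
      w ∈ p₁.support ∨ w ∈ p₂.support ∨ w ∈ p₃.support := by
    intro w f hf hwf
    induction f with
    | h a' b' =>
      have hadj : H.Adj a' b' := hf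
      rw [hH, SimpleGraph.Subgraph.sup_adj, SimpleGraph.Subgraph.sup_adj] at hadj
      rcases Sym2.mem_iff.mp hwf with rfl | rfl
      · rcases hadj with (h' | h') | h'
        · exact Or.inl (p₁.mem_verts_toSubgraph.mp h'.fst_mem)
        · exact Or.inr (Or.inl (p₂.mem_verts_toSubgraph.mp h'.fst_mem))
        · exact Or.inr (Or.inr (p₃.mem_verts_toSubgraph.mp h'.fst_mem))
      · rcases hadj with (h' | h') | h'
        · exact Or.inl (p₁.mem_verts_toSubgraph.mp h'.snd_mem)
        · exact Or.inr (Or.inl (p₂.mem_verts_toSubgraph.mp h'.snd_mem))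
        · exact Or.inr (Or.inr (p₃.mem_verts_toSubgraph.mp h'.snd_mem))
  -- support condition transfer
  have hsupcond : ∀ {a : V} (c : Γ.Walk a a), c.IsCycle →
      ∀ w ∈ c.support, w ∈ p₁.support ∨ w ∈ p₂.support ∨ w ∈ p₃.support := by
    intro a c hc w hw
    have hlen : c.length ≠ 0 := by have := hc.three_le_length; omega
    obtain ⟨f, hfc, hwf⟩ := aux_mem_edge_of_mem_support c hlen hw
    exact hinc w f (c.edges_subset_edgeSet hfc) hwf
  set q₁ : Γ.Walk x y := p₁.transfer Γ hpe1 with hq₁def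
  set q₂ : Γ.Walk x y := p₂.transfer Γ hpe2 with hq₂def
  set q₃ : Γ.Walk x y := p₃.transfer Γ hpe3 with hq₃def
  have hq1' : q₁.IsPath := h1.transfer hpe1
  have hq2' : q₂.IsPath := h2.transfer hpe2
  have hq3' : q₃.IsPath := h3.transfer hpe3
  have backeq : ∀ (p : G.Walk x y) (hp : ∀ f ∈ p.edges, f ∈ Γ.edgeSet) (p' : G.Walk x y)
      (hp' : ∀ f ∈ p'.edges, f ∈ Γ.edgeSet), p.transfer Γ hp = p'.transfer Γ hp' → p = p' := by
    intro p hp p' hp' hEq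
    have h3' := congrArg (fun w : Γ.Walk x y => w.transfer G
      (fun f hf => hΓG f (w.edges_subset_edgeSet hf))) hEq
    simpa [Walk.transfer_transfer, Walk.transfer_self] using h3'
  have dq12 : q₁ ≠ q₂ := fun h => d12 (backeq _ _ _ _ h)
  have dq13 : q₁ ≠ q₃ := fun h => d13 (backeq _ _ _ _ h)
  have dq23 : q₂ ≠ q₃ := fun h => d23 (backeq _ _ _ _ h)
  -- Γ is not acyclic
  have hnac : ¬ Γ.IsAcyclic := by
    intro hac
    exact dq12 (congrArg Subtype.val (hac.path_unique ⟨q₁, hq1'⟩ ⟨q₂, hq2'⟩))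
  rw [SimpleGraph.IsAcyclic] at hnac
  push_neg at hnac
  obtain ⟨a₀, c₀, hc₀⟩ := hnac
  have hc₀ne : c₀.edges ≠ [] := by
    have h3l := hc₀.three_le_length
    intro hnil
    have := c₀.length_edges
    rw [hnil] at this
    simp at this
    omega
  obtain ⟨e, he⟩ := List.exists_mem_of_ne_nil _ hc₀ne
  induction e using Sym2.ind with
  | _ u v =>
  set F : SimpleGraph V := Γ.deleteEdges {s(u, v)} with hFdef
  have hFΓ : ∀ f ∈ F.edgeSet, f ∈ Γ.edgeSet := fun f hf =>
    SimpleGraph.edgeSet_mono (SimpleGraph.deleteEdges_le _) hf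
  -- F is acyclic
  have hFac : F.IsAcyclic := by
    intro w c hc
    have hce : ∀ f ∈ c.edges, f ∈ Γ.edgeSet := fun f hf => hFΓ f (c.edges_subset_edgeSet hf)
    have hcΓ : (c.transfer Γ hce).IsCycle := hc.transfer hce
    have hceq := hcyc _ _ ((c.transfer Γ hce).transfer G
        (fun f hf => hΓG f ((c.transfer Γ hce).edges_subset_edgeSet hf)))
      (c₀.transfer G (fun f hf => hΓG f (c₀.edges_subset_edgeSet hf)))
      (hcΓ.transfer _) (hc₀.transfer _)
      (by
        intro w' hw'
        rw [Walk.support_transfer, Walk.support_transfer] at hw'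
        exact hsupcond _ hcΓ w' (by rwa [Walk.support_transfer]))
      (by
        intro w' hw'
        rw [Walk.support_transfer] at hw'
        exact hsupcond _ hc₀ w' hw')
    have heM : s(u, v) ∈ (c.transfer Γ hce).edges := by
      have : s(u, v) ∈ (c₀.transfer G (fun f hf => hΓG f (c₀.edges_subset_edgeSet hf))).edges := by rwa [Walk.edges_transfer]
      have h5 : s(u,v) ∈ ((c.transfer Γ hce).transfer G (fun f hf => hΓG f ((c.transfer Γ hce).edges_subset_edgeSet hf))).edges.toFinset := by
        rw [hceq]; exact List.mem_toFinset.mpr this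
      rw [List.mem_toFinset, Walk.edges_transfer] at h5
      exact h5
    rw [Walk.edges_transfer] at heM
    have : s(u, v) ∈ F.edgeSet := c.edges_subset_edgeSet heM
    rw [hFdef, SimpleGraph.edgeSet_deleteEdges] at this
    exact this.2 rfl
  have hFac' : (Γ.deleteEdges {s(v, u)}).IsAcyclic := by
    rw [show s(v,u) = s(u,v) from Sym2.eq_swap]
    exact hFac
  -- status of each path
  have hstat : ∀ q : Γ.Walk x y, (s(u, v) ∉ q.edges) ∨
      (∃ (a : Γ.Walk x u) (h : Γ.Adj u v) (b : Γ.Walk v y), q = a.append (Walk.cons h b)) ∨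
      (∃ (a : Γ.Walk x v) (h : Γ.Adj v u) (b : Γ.Walk u y), q = a.append (Walk.cons h b)) := by
    intro q
    by_cases hq : s(u, v) ∈ q.edges
    · rcases aux_split_at_edge q hq with h | h
      · exact Or.inr (Or.inl h)
      · exact Or.inr (Or.inr h)
    · exact Or.inl hq
  rcases hstat q₁ with s1 | ⟨a1, hh1, b1, e1⟩ | ⟨a1, hh1, b1, e1⟩ <;>
    rcases hstat q₂ with s2 | ⟨a2, hh2, b2, e2⟩ | ⟨a2, hh2, b2, e2⟩ <;>
      rcases hstat q₃ with s3 | ⟨a3, hh3, b3, e3⟩ | ⟨a3, hh3, b3, e3⟩ <;>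
  first
    | exact dq12 (aux_avoid_eq hFac q₁ q₂ hq1' hq2' s1 s2)
    | exact dq13 (aux_avoid_eq hFac q₁ q₃ hq1' hq3' s1 s3)
    | exact dq23 (aux_avoid_eq hFac q₂ q₃ hq2' hq3' s2 s3)
    | exact dq12 (by rw [e1, e2]; exact aux_samedir hFac a1 a2 hh1 hh2 b1 b2 (e1 ▸ hq1') (e2 ▸ hq2') rfl)
    | exact dq13 (by rw [e1, e3]; exact aux_samedir hFac a1 a3 hh1 hh3 b1 b3 (e1 ▸ hq1') (e3 ▸ hq3') rfl)
    | exact dq23 (by rw [e2, e3]; exact aux_samedir hFac a2 a3 hh2 hh3 b2 b3 (e2 ▸ hq2') (e3 ▸ hq3') rfl)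
    | exact dq12 (by rw [e1, e2]; exact aux_samedir hFac' a1 a2 hh1 hh2 b1 b2 (e1 ▸ hq1') (e2 ▸ hq2') rfl)
    | exact dq13 (by rw [e1, e3]; exact aux_samedir hFac' a1 a3 hh1 hh3 b1 b3 (e1 ▸ hq1') (e3 ▸ hq3') rfl)
    | exact dq23 (by rw [e2, e3]; exact aux_samedir hFac' a2 a3 hh2 hh3 b2 b3 (e2 ▸ hq2') (e3 ▸ hq3') rfl)
    | exact aux_oppdir hFac a1 hh1 b1 a2 hh2 b2 (e1 ▸ hq1') (e2 ▸ hq2') rfl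
    | exact aux_oppdir hFac a2 hh2 b2 a1 hh1 b1 (e2 ▸ hq2') (e1 ▸ hq1') rfl
    | exact aux_oppdir hFac a1 hh1 b1 a3 hh3 b3 (e1 ▸ hq1') (e3 ▸ hq3') rfl
    | exact aux_oppdir hFac a3 hh3 b3 a1 hh1 b1 (e3 ▸ hq3') (e1 ▸ hq1') rfl
    | exact aux_oppdir hFac a2 hh2 b2 a3 hh3 b3 (e2 ▸ hq2') (e3 ▸ hq3') rfl
    | exact aux_oppdir hFac a3 hh3 b3 a2 hh2 b2 (e3 ▸ hq3') (e2 ▸ hq2') rfl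
lemma aux_pathCount_symm {G : SimpleGraph V} (ℓ : ℕ) (i j : V) :
    pathCount G ℓ i j = pathCount G ℓ j i := by
  unfold pathCount
  have himg : {p : G.Walk j i | p.IsPath ∧ p.length = ℓ}
      = Walk.reverse '' {p : G.Walk i j | p.IsPath ∧ p.length = ℓ} := by
    ext q
    constructor
    · rintro ⟨hq, hql⟩
      exact ⟨q.reverse, ⟨hq.reverse, by simp [hql]⟩, q.reverse_reverse⟩
    · rintro ⟨p, ⟨hp, hpl⟩, rfl⟩
      exact ⟨hp.reverse, by simp [hpl]⟩
  rw [himg, Set.ncard_image_of_injective _ fun p q hpq => by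
    rw [← p.reverse_reverse, hpq, q.reverse_reverse]]

lemma aux_edistToSet_le {G : SimpleGraph V} {S : Set V} {v w : V} (hw : w ∈ S) :
    edistToSet G S v ≤ G.edist v w :=
  iInf₂_le w hw

lemma aux_support_subset_of_edges_eq [DecidableEq V] {G : SimpleGraph V} {a b : V}
    {c : G.Walk a a} {c' : G.Walk b b} (hc : c.IsCycle)
    (h : c.edges.toFinset = c'.edges.toFinset) : ∀ w ∈ c.support, w ∈ c'.support := by
  intro w hw
  have hlen : c.length ≠ 0 := by have := hc.three_le_length; omega
  obtain ⟨e, hec, hwe⟩ := aux_mem_edge_of_mem_support c hlen hw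
  have hec' : e ∈ c'.edges := by
    have : e ∈ c'.edges.toFinset := h ▸ List.mem_toFinset.mpr hec
    exact List.mem_toFinset.mp this
  induction e with
  | h x y =>
    rcases Sym2.mem_iff.mp hwe with rfl | rfl
    · exact c'.fst_mem_support_of_mem_edges hec'
    · exact c'.snd_mem_support_of_mem_edges hec'

lemma aux_support_eq_of_edges_eq [DecidableEq V] {G : SimpleGraph V} {a b : V}
    {c : G.Walk a a} {c' : G.Walk b b} (hc : c.IsCycle) (hc' : c'.IsCycle)
    (h : c.edges.toFinset = c'.edges.toFinset) :
    {w | w ∈ c.support} = {w | w ∈ c'.support} := by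
  ext w
  exact ⟨fun hw => aux_support_subset_of_edges_eq hc h w hw,
    fun hw => aux_support_subset_of_edges_eq hc' h.symm w hw⟩
lemma aux_key [Fintype V] [DecidableEq V] (G : SimpleGraph V) (ℓ : ℕ)
    (hdisj : ∀ (a b : V) (c₁ : G.Walk a a) (c₂ : G.Walk b b),
      c₁.IsCycle → c₂.IsCycle → c₁.edges.toFinset ≠ c₂.edges.toFinset →
      Disjoint {v : V | edistToSet G {w | w ∈ c₁.support} v ≤ (ℓ : ℕ∞)}
        {v : V | edistToSet G {w | w ∈ c₂.support} v ≤ (ℓ : ℕ∞)}) (i j : V)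
    (hne0 : (pathCount G ℓ i j : ℝ) - (if G.edist i j = (ℓ : ℕ∞) then 1 else 0) ≠ 0) :
    |(pathCount G ℓ i j : ℝ) - (if G.edist i j = (ℓ : ℕ∞) then 1 else 0)| ≤ 1 ∧
    ∃ (a : V) (c : G.Walk a a), c.IsCycle ∧
      edistToSet G {w | w ∈ c.support} i + edistToSet G {w | w ∈ c.support} j ≤ (ℓ : ℕ∞) := by
  classical
  have hfin : {p : G.Walk i j | p.IsPath ∧ p.length = ℓ}.Finite := Set.toFinite _
  -- distance bound from membership on a short path
  have hwd : ∀ (p : G.Walk i j), p.length ≤ ℓ → ∀ w ∈ p.support,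
      G.edist i w + G.edist w j ≤ (ℓ : ℕ∞) := by
    intro p hpl w hw
    exact (aux_edist_add_edist_le p hw).trans (by exact_mod_cast Nat.cast_le.mpr hpl)
  -- two distinct short paths give the cycle existence statement
  have htwo : ∀ (p q : G.Walk i j), p.IsPath → q.IsPath → p ≠ q →
      p.length ≤ ℓ → q.length ≤ ℓ →
      ∃ (a : V) (c : G.Walk a a), c.IsCycle ∧
        edistToSet G {w | w ∈ c.support} i + edistToSet G {w | w ∈ c.support} j ≤ (ℓ : ℕ∞) := by
    intro p q hp hq hne hpl hql
    obtain ⟨a, c, hc, hsup⟩ := aux_cycle_of_two_paths p q hp hq hne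
    refine ⟨a, c, hc, ?_⟩
    have ha : a ∈ c.support := c.start_mem_support
    have hle1 : edistToSet G {w | w ∈ c.support} i ≤ G.edist i a := aux_edistToSet_le ha
    have hle2 : edistToSet G {w | w ∈ c.support} j ≤ G.edist j a := aux_edistToSet_le ha
    rcases hsup a ha with hw | hw
    · calc edistToSet G {w | w ∈ c.support} i + edistToSet G {w | w ∈ c.support} j
          ≤ G.edist i a + G.edist a j := by
            refine add_le_add hle1 (hle2.trans ?_)
            rw [SimpleGraph.edist_comm]
        _ ≤ (ℓ : ℕ∞) := hwd p hpl a hw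
    · calc edistToSet G {w | w ∈ c.support} i + edistToSet G {w | w ∈ c.support} j
          ≤ G.edist i a + G.edist a j := by
            refine add_le_add hle1 (hle2.trans ?_)
            rw [SimpleGraph.edist_comm]
        _ ≤ (ℓ : ℕ∞) := hwd q hql a hw
  -- three pairwise distinct short paths are impossible
  have hthree : ∀ (p₁ p₂ p₃ : G.Walk i j), p₁.IsPath → p₂.IsPath → p₃.IsPath →
      p₁ ≠ p₂ → p₁ ≠ p₃ → p₂ ≠ p₃ →
      p₁.length ≤ ℓ → p₂.length ≤ ℓ → p₃.length ≤ ℓ → False := by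
    intro p₁ p₂ p₃ h1 h2 h3 d12 d13 d23 hl1 hl2 hl3
    apply aux_three_paths p₁ p₂ p₃ h1 h2 h3 d12 d13 d23
    intro av bv c c' hc hc' hsup hsup'
    by_contra hnedge
    have hdj := hdisj av bv c c' hc hc' hnedge
    have hmem : ∀ (w : V) (cc : G.Walk w w), cc.IsCycle →
        (∀ x ∈ cc.support, x ∈ p₁.support ∨ x ∈ p₂.support ∨ x ∈ p₃.support) →
        i ∈ {v : V | edistToSet G {x | x ∈ cc.support} v ≤ (ℓ : ℕ∞)} := by
      intro w cc hcc hsupcc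
      have hw : w ∈ cc.support := cc.start_mem_support
      have hle : edistToSet G {x | x ∈ cc.support} i ≤ G.edist i w := aux_edistToSet_le hw
      have hde : G.edist i w ≤ (ℓ : ℕ∞) := by
        rcases hsupcc w hw with h' | h' | h'
        · exact le_trans le_self_add (hwd p₁ hl1 w h')
        · exact le_trans le_self_add (hwd p₂ hl2 w h')
        · exact le_trans le_self_add (hwd p₃ hl3 w h')
      exact Set.mem_setOf.mpr (hle.trans hde)
    exact Set.disjoint_left.mp hdj (hmem av c hc hsup) (hmem bv c' hc' hsup')
  by_cases hd : G.edist i j = (ℓ : ℕ∞)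
  · -- distance exactly ℓ
    have hdist : G.dist i j = ℓ := by
      rw [SimpleGraph.dist, hd]
      exact ENat.toNat_coe ℓ
    obtain ⟨p₀, hp₀l⟩ := SimpleGraph.exists_walk_of_edist_eq_coe hd
    have hp₀ : p₀.IsPath := p₀.isPath_of_length_eq_dist (by rw [hdist, hp₀l])
    have hmem₀ : p₀ ∈ {p : G.Walk i j | p.IsPath ∧ p.length = ℓ} := ⟨hp₀, hp₀l⟩
    have hpc1 : 1 ≤ pathCount G ℓ i j := (Set.ncard_pos hfin).mpr ⟨p₀, hmem₀⟩
    have hpc2 : pathCount G ℓ i j ≤ 2 := by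
      by_contra hgt
      rw [not_le] at hgt
      obtain ⟨p₁, hm1, p₂, hm2, p₃, hm3, d12, d13, d23⟩ := (Set.two_lt_ncard hfin).mp hgt
      exact hthree p₁ p₂ p₃ hm1.1 hm2.1 hm3.1 d12 d13 d23 hm1.2.le hm2.2.le hm3.2.le
    constructor
    · rw [if_pos hd]
      have : pathCount G ℓ i j = 1 ∨ pathCount G ℓ i j = 2 := by omega
      rcases this with h' | h' <;> rw [h'] <;> norm_num
    · -- pc = 2 since A ≠ 0
      have hpcne : pathCount G ℓ i j ≠ 1 := by
        intro h'
        rw [if_pos hd, h'] at hne0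
        norm_num at hne0
      have h2 : 1 < pathCount G ℓ i j := by omega
      obtain ⟨p, hmp, q, hmq, hpq⟩ := (Set.one_lt_ncard hfin).mp h2
      exact htwo p q hmp.1 hmq.1 hpq hmp.2.le hmq.2.le
  · -- distance different from ℓ
    have hA : (pathCount G ℓ i j : ℝ) - (if G.edist i j = (ℓ : ℕ∞) then 1 else 0)
        = (pathCount G ℓ i j : ℝ) := by rw [if_neg hd, sub_zero]
    rw [hA] at hne0 ⊢
    have hpc1 : 1 ≤ pathCount G ℓ i j := by
      by_contra h'
      exact hne0 (by simp [Nat.lt_one_iff.mp (not_le.mp h')])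
    obtain ⟨p, hmp⟩ := (Set.ncard_pos hfin).mp hpc1
    have hne_top : G.edist i j ≠ ⊤ := by
      have : G.edist i j ≤ (ℓ : ℕ∞) := by
        refine (SimpleGraph.edist_le p).trans ?_
        exact_mod_cast Nat.cast_le.mpr hmp.2.le
      exact ne_top_of_le_ne_top (by simp) this
    obtain ⟨q, hql⟩ := SimpleGraph.exists_walk_of_edist_ne_top hne_top
    have hq : q.IsPath := q.isPath_of_length_eq_dist (by
      rw [SimpleGraph.dist, ← hql]
      exact (ENat.toNat_coe q.length).symm)
    have hqlen : q.length ≤ ℓ := by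
      have h1 : (q.length : ℕ∞) ≤ (ℓ : ℕ∞) := by
        rw [hql]
        refine (SimpleGraph.edist_le p).trans ?_
        exact_mod_cast Nat.cast_le.mpr hmp.2.le
      exact_mod_cast h1
    have hqne : q.length ≠ ℓ := by
      intro h'
      exact hd (by rw [← hql, h'])
    have hpq : p ≠ q := by
      intro h'
      rw [← h'] at hqne
      exact hqne hmp.2
    have hpc2 : pathCount G ℓ i j ≤ 1 := by
      by_contra hgt
      rw [not_le] at hgt
      obtain ⟨p₁, hm1, p₂, hm2, d12⟩ := (Set.one_lt_ncard hfin).mp hgt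
      have hd1 : p₁ ≠ q := fun h' => hqne (h' ▸ hm1.2)
      have hd2 : p₂ ≠ q := fun h' => hqne (h' ▸ hm2.2)
      exact hthree p₁ p₂ q hm1.1 hm2.1 hq d12 hd1 hd2 hm1.2.le hm2.2.le hqlen
    constructor
    · have : pathCount G ℓ i j = 1 := by omega
      rw [this]
      norm_num
    · exact htwo p q hmp.1 hq hpq hmp.2.le hqlen

section Schur
variable {n : Type*} [Fintype n]

lemma schur_sum (A : Matrix n n ℝ) (h : n → ℝ) (hp : ∀ i, 0 < h i) (C : ℝ)
    (hC : 0 ≤ C)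
    (hrow : ∀ i, ∑ j, |A i j| * h j ≤ C * h i)
    (hcol : ∀ j, ∑ i, |A i j| * h i ≤ C * h j)
    (x : n → ℝ) : ∑ i, (∑ j, A i j * x j) ^ 2 ≤ C ^ 2 * ∑ j, (x j) ^ 2 := by
  have step1 : ∀ i, (∑ j, A i j * x j) ^ 2 ≤
      (∑ j, |A i j| * h j) * (∑ j, |A i j| / h j * x j ^ 2) := by
    intro i
    have habs : (∑ j, A i j * x j) ^ 2 ≤ (∑ j, |A i j| * |x j|) ^ 2 := by
      rw [← sq_abs]
      apply pow_le_pow_left₀ (abs_nonneg _)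
      calc |∑ j, A i j * x j| ≤ ∑ j, |A i j * x j| := Finset.abs_sum_le_sum_abs _ _
        _ = ∑ j, |A i j| * |x j| := by simp [abs_mul]
    have hCS := Finset.sum_mul_sq_le_sq_mul_sq Finset.univ
      (fun j => Real.sqrt (|A i j| * h j)) (fun j => Real.sqrt (|A i j| / h j) * |x j|)
    have heq1 : ∀ j, Real.sqrt (|A i j| * h j) * (Real.sqrt (|A i j| / h j) * |x j|)
        = |A i j| * |x j| := by
      intro j
      rw [← mul_assoc, ← Real.sqrt_mul (mul_nonneg (abs_nonneg _) (hp j).le)]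
      have hne : h j ≠ 0 := (hp j).ne'
      have : |A i j| * h j * (|A i j| / h j) = |A i j| ^ 2 := by
        field_simp
      rw [this, Real.sqrt_sq_eq_abs, abs_abs]
    have heq2 : ∀ j, Real.sqrt (|A i j| * h j) ^ 2 = |A i j| * h j := fun j =>
      Real.sq_sqrt (mul_nonneg (abs_nonneg _) (hp j).le)
    have heq3 : ∀ j, (Real.sqrt (|A i j| / h j) * |x j|) ^ 2 = |A i j| / h j * x j ^ 2 := by
      intro j
      rw [mul_pow, Real.sq_sqrt (div_nonneg (abs_nonneg _) (hp j).le), sq_abs]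
    calc (∑ j, A i j * x j) ^ 2 ≤ (∑ j, |A i j| * |x j|) ^ 2 := habs
      _ = (∑ j, Real.sqrt (|A i j| * h j) * (Real.sqrt (|A i j| / h j) * |x j|)) ^ 2 := by
          rw [Finset.sum_congr rfl (fun j _ => (heq1 j).symm)]
      _ ≤ (∑ j, Real.sqrt (|A i j| * h j) ^ 2) * (∑ j, (Real.sqrt (|A i j| / h j) * |x j|) ^ 2) :=
          hCS
      _ = (∑ j, |A i j| * h j) * (∑ j, |A i j| / h j * x j ^ 2) := by
          rw [Finset.sum_congr rfl (fun j _ => heq2 j), Finset.sum_congr rfl (fun j _ => heq3 j)]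
  calc ∑ i, (∑ j, A i j * x j) ^ 2
      ≤ ∑ i, (C * h i) * (∑ j, |A i j| / h j * x j ^ 2) := by
        apply Finset.sum_le_sum
        intro i _
        refine (step1 i).trans (mul_le_mul_of_nonneg_right (hrow i) ?_)
        exact Finset.sum_nonneg fun j _ =>
          mul_nonneg (div_nonneg (abs_nonneg _) (hp j).le) (sq_nonneg _)
    _ = C * ∑ j, (∑ i, |A i j| * h i) * (x j ^ 2 / h j) := by
        rw [Finset.mul_sum]
        simp_rw [Finset.mul_sum, Finset.sum_mul]
        rw [Finset.sum_comm]
        exact Finset.sum_congr rfl fun j _ => by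
          rw [Finset.mul_sum]
          exact Finset.sum_congr rfl fun i _ => by ring
    _ ≤ C * ∑ j, (C * h j) * (x j ^ 2 / h j) := by
        apply mul_le_mul_of_nonneg_left _ hC
        apply Finset.sum_le_sum
        intro j _
        exact mul_le_mul_of_nonneg_right (hcol j) (div_nonneg (sq_nonneg _) (hp j).le)
    _ = C ^ 2 * ∑ j, x j ^ 2 := by
        rw [Finset.mul_sum, Finset.mul_sum]
        refine Finset.sum_congr rfl fun j _ => ?_
        have hne : h j ≠ 0 := (hp j).ne'
        field_simp

lemma schur_norm [DecidableEq n] (A : Matrix n n ℝ) (h : n → ℝ) (hp : ∀ i, 0 < h i) (C : ℝ)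
    (hC : 0 ≤ C)
    (hrow : ∀ i, ∑ j, |A i j| * h j ≤ C * h i)
    (hcol : ∀ j, ∑ i, |A i j| * h i ≤ C * h j) :
    ‖Matrix.toEuclideanCLM (𝕜 := ℝ) A‖ ≤ C := by
  refine ContinuousLinearMap.opNorm_le_bound _ hC fun x => ?_
  set y : n → ℝ := (WithLp.equiv 2 (n → ℝ)) x with hy
  have hx : x = (WithLp.equiv 2 (n → ℝ)).symm y := ((WithLp.equiv 2 (n → ℝ)).symm_apply_apply x).symm
  rw [hx, show Matrix.toEuclideanCLM (𝕜 := ℝ) A ((WithLp.equiv 2 (n → ℝ)).symm y) = (WithLp.equiv 2 (n → ℝ)).symm (A.mulVec y) from rfl]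
  have hnorm1 : ‖(WithLp.equiv 2 (n → ℝ)).symm (A.mulVec y)‖
      = Real.sqrt (∑ i, (A.mulVec y i) ^ 2) := by
    rw [EuclideanSpace.norm_eq]
    congr 1
    refine Finset.sum_congr rfl fun i _ => ?_
    rw [WithLp.equiv_symm_apply, PiLp.toLp_apply, Real.norm_eq_abs, sq_abs]
  have hnorm2 : ‖(WithLp.equiv 2 (n → ℝ)).symm y‖ = Real.sqrt (∑ i, (y i) ^ 2) := by
    rw [EuclideanSpace.norm_eq]
    congr 1
    refine Finset.sum_congr rfl fun i _ => ?_
    rw [WithLp.equiv_symm_apply, PiLp.toLp_apply, Real.norm_eq_abs, sq_abs]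
  rw [hnorm1, hnorm2]
  have key := schur_sum A h hp C hC hrow hcol y
  have hsum : ∑ i, (A.mulVec y i) ^ 2 = ∑ i, (∑ j, A i j * y j) ^ 2 :=
    Finset.sum_congr rfl fun i _ => by simp [Matrix.mulVec, dotProduct]
  rw [hsum]
  calc Real.sqrt (∑ i, (∑ j, A i j * y j) ^ 2)
      ≤ Real.sqrt (C ^ 2 * ∑ j, (y j) ^ 2) := Real.sqrt_le_sqrt key
    _ = C * Real.sqrt (∑ j, (y j) ^ 2) := by
        rw [Real.sqrt_mul (sq_nonneg C), Real.sqrt_sq hC]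

end Schur
theorem aux_main {V : Type*} [Fintype V] [DecidableEq V]
    (G : SimpleGraph V) (ℓ : ℕ) (hℓ : 1 ≤ ℓ) (α L : ℝ) (hα : 1 ≤ α) (hL : 0 < L)
    (hgrowth : ∀ (a : V) (c : G.Walk a a), c.IsCycle → ∀ t ≤ ℓ,
      ({v : V | edistToSet G {w | w ∈ c.support} v = (t : ℕ∞)}.ncard : ℝ) ≤ L * α ^ t)
    (hdisj : ∀ (a b : V) (c₁ : G.Walk a a) (c₂ : G.Walk b b),
      c₁.IsCycle → c₂.IsCycle → c₁.edges.toFinset ≠ c₂.edges.toFinset →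
      Disjoint {v : V | edistToSet G {w | w ∈ c₁.support} v ≤ (ℓ : ℕ∞)}
        {v : V | edistToSet G {w | w ∈ c₂.support} v ≤ (ℓ : ℕ∞)}) :
    ‖Matrix.toEuclideanCLM (𝕜 := ℝ) (Matrix.of fun i j : V =>
        (pathCount G ℓ i j : ℝ) - (if G.edist i j = (ℓ : ℕ∞) then 1 else 0))‖ ≤
      ((ℓ : ℝ) + 1) * L * Real.sqrt (α ^ ℓ) := by
  classical
  have hα0 : (0 : ℝ) ≤ α := le_trans zero_le_one hα
  have hs1 : (1 : ℝ) ≤ Real.sqrt α := Real.one_le_sqrt.mpr hα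
  have hs0 : (0 : ℝ) < Real.sqrt α := lt_of_lt_of_le zero_lt_one hs1
  set A : Matrix V V ℝ := Matrix.of fun i j : V =>
      (pathCount G ℓ i j : ℝ) - (if G.edist i j = (ℓ : ℕ∞) then 1 else 0) with hAdef
  have hAapp : ∀ i j, A i j
      = (pathCount G ℓ i j : ℝ) - (if G.edist i j = (ℓ : ℕ∞) then 1 else 0) :=
    fun i j => rfl
  have hsymA : ∀ i j, A i j = A j i := by
    intro i j
    rw [hAapp, hAapp, aux_pathCount_symm, SimpleGraph.edist_comm]
  have key : ∀ i j : V, A i j ≠ 0 → |A i j| ≤ 1 ∧ ∃ (a : V) (c : G.Walk a a), c.IsCycle ∧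
      edistToSet G {w | w ∈ c.support} i + edistToSet G {w | w ∈ c.support} j ≤ (ℓ : ℕ∞) := by
    intro i j hz
    have h := aux_key G ℓ hdisj i j (by rw [hAapp] at hz; exact hz)
    exact ⟨by rw [hAapp]; exact h.1, h.2⟩
  -- choice of a nearby cycle support for each vertex
  set cycP : V → Prop := fun i => ∃ (a : V) (c : G.Walk a a), c.IsCycle ∧
      edistToSet G {w | w ∈ c.support} i ≤ (ℓ : ℕ∞) with hcycP
  have hSex : ∀ i : V, ∃ S : Set V,
      cycP i → ∃ (a : V) (c : G.Walk a a), c.IsCycle ∧ S = {w | w ∈ c.support} ∧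
        edistToSet G S i ≤ (ℓ : ℕ∞) := by
    intro i
    by_cases h : cycP i
    · obtain ⟨a, c, hc, hle⟩ := h
      exact ⟨{w | w ∈ c.support}, fun _ => ⟨a, c, hc, rfl, hle⟩⟩
    · exact ⟨∅, fun hcon => absurd hcon h⟩
  choose S hS using hSex
  set s : V → ℕ := fun i => (edistToSet G (S i) i).toNat with hsdef
  set hh : V → ℝ := fun i => Real.sqrt α ^ (ℓ - s i) with hhdef
  have hhpos : ∀ i, 0 < hh i := fun i => pow_pos hs0 _
  set C : ℝ := ((ℓ : ℝ) + 1) * L * Real.sqrt α ^ ℓ with hCdef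
  have hC0 : 0 ≤ C := by
    rw [hCdef]
    exact mul_nonneg (mul_nonneg (by positivity) hL.le) (pow_nonneg hs0.le _)
  -- uniqueness of the nearby cycle support
  have huniq : ∀ (i : V) (a : V) (c : G.Walk a a), c.IsCycle →
      edistToSet G {w | w ∈ c.support} i ≤ (ℓ : ℕ∞) →
      ∀ v, edistToSet G (S i) v = edistToSet G {w | w ∈ c.support} v := by
    intro i a c hc hle
    obtain ⟨a', c', hc', hSeq, hle'⟩ := hS i ⟨a, c, hc, hle⟩
    by_cases hne : c'.edges.toFinset = c.edges.toFinset
    · intro v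
      rw [hSeq, aux_support_eq_of_edges_eq hc' hc hne]
    · exfalso
      have hdj := hdisj a' a c' c hc' hc hne
      have hi1 : i ∈ {v | edistToSet G {w | w ∈ c'.support} v ≤ (ℓ : ℕ∞)} := by
        rw [Set.mem_setOf, ← hSeq]
        exact hle'
      exact Set.disjoint_left.mp hdj hi1 hle
  -- the row bound
  have hrow : ∀ i, ∑ j, |A i j| * hh j ≤ C * hh i := by
    intro i
    by_cases hcyci : cycP i
    · obtain ⟨ac, cc, hcc, hSeq, hlei⟩ := hS i hcyci
      have hsle : s i ≤ ℓ := ENat.toNat_le_of_le_coe hlei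
      have hdine : edistToSet G (S i) i ≠ ⊤ :=
        ne_top_of_le_ne_top (ENat.coe_ne_top ℓ) hlei
      have hdieq : edistToSet G (S i) i = (s i : ℕ∞) := (ENat.coe_toNat hdine).symm
      have hcard : ∀ t : ℕ, t ≤ ℓ →
          ((Finset.univ.filter fun j : V => edistToSet G (S i) j = (t : ℕ∞)).card : ℝ)
            ≤ L * α ^ t := by
        intro t ht
        have hn : {v : V | edistToSet G (S i) v = (t : ℕ∞)}.ncard
            = (Finset.univ.filter fun j : V => edistToSet G (S i) j = (t : ℕ∞)).card := by
          rw [Set.ncard_eq_toFinset_card', Set.toFinset_setOf]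
        rw [← hn]
        have hset : {v : V | edistToSet G (S i) v = (t : ℕ∞)}
            = {v : V | edistToSet G {w | w ∈ cc.support} v = (t : ℕ∞)} := by
          rw [hSeq]
        rw [hset]
        exact hgrowth ac cc hcc t ht
      have hterm : ∀ j, |A i j| * hh j ≤ ∑ t ∈ Finset.range (ℓ - s i + 1),
          (if edistToSet G (S i) j = (t : ℕ∞) then Real.sqrt α ^ (ℓ - t) else 0) := by
        intro j
        by_cases hz : A i j = 0
        · rw [hz, abs_zero, zero_mul]
          exact Finset.sum_nonneg fun t _ => by split <;> positivity
        · obtain ⟨habs, av, c, hc, hsum⟩ := key i j hz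
          have hlei' : edistToSet G {w | w ∈ c.support} i ≤ (ℓ : ℕ∞) :=
            le_trans le_self_add hsum
          have hlej' : edistToSet G {w | w ∈ c.support} j ≤ (ℓ : ℕ∞) :=
            le_trans le_add_self hsum
          have hSieq := huniq i av c hc hlei'
          have hsumS : edistToSet G (S i) i + edistToSet G (S i) j ≤ (ℓ : ℕ∞) := by
            rw [hSieq i, hSieq j]
            exact hsum
          set t : ℕ := (edistToSet G (S i) j).toNat with htdef
          have hjne : edistToSet G (S i) j ≠ ⊤ := by
            intro h'
            rw [h', add_top] at hsumS
            exact absurd hsumS (by simp)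
          have hjeq : edistToSet G (S i) j = (t : ℕ∞) := (ENat.coe_toNat hjne).symm
          have htadd : s i + t ≤ ℓ := by
            rw [hdieq, hjeq, ← Nat.cast_add] at hsumS
            exact_mod_cast hsumS
          have hSjeq := huniq j av c hc hlej'
          have hsj : s j = t := by
            rw [hsdef]
            simp only
            rw [hSjeq j, ← hSieq j]
          have hhj : hh j = Real.sqrt α ^ (ℓ - t) := by
            rw [hhdef]
            simp only
            rw [hsj]
          have hmemt : t ∈ Finset.range (ℓ - s i + 1) := Finset.mem_range.mpr (by omega)
          calc |A i j| * hh j ≤ 1 * hh j :=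
                mul_le_mul_of_nonneg_right habs (hhpos j).le
            _ = Real.sqrt α ^ (ℓ - t) := by rw [one_mul, hhj]
            _ ≤ ∑ t' ∈ Finset.range (ℓ - s i + 1),
                (if edistToSet G (S i) j = (t' : ℕ∞) then Real.sqrt α ^ (ℓ - t') else 0) := by
                have hsingle := Finset.single_le_sum
                  (f := fun t' : ℕ => if edistToSet G (S i) j = (t' : ℕ∞)
                    then Real.sqrt α ^ (ℓ - t') else 0)
                  (fun t' _ => by split_ifs <;> positivity) hmemt
                rwa [if_pos hjeq] at hsingle
      calc ∑ j, |A i j| * hh j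
          ≤ ∑ j, ∑ t ∈ Finset.range (ℓ - s i + 1),
            (if edistToSet G (S i) j = (t : ℕ∞) then Real.sqrt α ^ (ℓ - t) else 0) :=
            Finset.sum_le_sum fun j _ => hterm j
        _ = ∑ t ∈ Finset.range (ℓ - s i + 1), ∑ j,
            (if edistToSet G (S i) j = (t : ℕ∞) then Real.sqrt α ^ (ℓ - t) else 0) :=
            Finset.sum_comm
        _ ≤ ∑ t ∈ Finset.range (ℓ - s i + 1), (L * α ^ t) * Real.sqrt α ^ (ℓ - t) := by
            apply Finset.sum_le_sum
            intro t htmem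
            have ht : t ≤ ℓ := by
              have := Finset.mem_range.mp htmem
              omega
            calc ∑ j, (if edistToSet G (S i) j = (t : ℕ∞) then Real.sqrt α ^ (ℓ - t) else 0)
                = ∑ j ∈ Finset.univ.filter (fun j => edistToSet G (S i) j = (t : ℕ∞)),
                  Real.sqrt α ^ (ℓ - t) := (Finset.sum_filter _ _).symm
              _ = ((Finset.univ.filter fun j : V =>
                    edistToSet G (S i) j = (t : ℕ∞)).card : ℝ) * Real.sqrt α ^ (ℓ - t) := by
                  rw [Finset.sum_const, nsmul_eq_mul]
              _ ≤ (L * α ^ t) * Real.sqrt α ^ (ℓ - t) :=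
                  mul_le_mul_of_nonneg_right (hcard t ht) (by positivity)
        _ ≤ ∑ t ∈ Finset.range (ℓ - s i + 1), L * Real.sqrt α ^ (ℓ + (ℓ - s i)) := by
            apply Finset.sum_le_sum
            intro t htmem
            have htle : t ≤ ℓ - s i := by
              have := Finset.mem_range.mp htmem
              omega
            have hα_eq : α ^ t = Real.sqrt α ^ (2 * t) := by
              rw [pow_mul, Real.sq_sqrt hα0]
            calc (L * α ^ t) * Real.sqrt α ^ (ℓ - t)
                = L * Real.sqrt α ^ (2 * t + (ℓ - t)) := by
                  rw [hα_eq, pow_add]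
                  ring
              _ ≤ L * Real.sqrt α ^ (ℓ + (ℓ - s i)) := by
                  apply mul_le_mul_of_nonneg_left _ hL.le
                  apply pow_le_pow_right₀ hs1
                  omega
        _ = (((ℓ - s i : ℕ) : ℝ) + 1) * (L * Real.sqrt α ^ (ℓ + (ℓ - s i))) := by
            rw [Finset.sum_const, Finset.card_range, nsmul_eq_mul]
            push_cast
            ring
        _ ≤ C * hh i := by
            rw [hCdef, hhdef]
            simp only
            rw [pow_add]
            have h1 : ((ℓ - s i : ℕ) : ℝ) + 1 ≤ (ℓ : ℝ) + 1 := by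
              have h2 : (ℓ - s i : ℕ) ≤ ℓ := Nat.sub_le _ _
              exact add_le_add_left (by exact_mod_cast h2) 1
            have h2 : (0 : ℝ) ≤ L * (Real.sqrt α ^ ℓ * Real.sqrt α ^ (ℓ - s i)) :=
              mul_nonneg hL.le (by positivity)
            nlinarith [h1, h2]
    · -- no nearby cycle: the row is zero
      have hz : ∀ j, A i j = 0 := by
        intro j
        by_contra hne0
        obtain ⟨-, a, c, hc, hsum⟩ := key i j hne0
        exact hcyci ⟨a, c, hc, le_trans le_self_add hsum⟩
      calc ∑ j, |A i j| * hh j = 0 :=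
            Finset.sum_eq_zero fun j _ => by rw [hz j, abs_zero, zero_mul]
        _ ≤ C * hh i := mul_nonneg hC0 (hhpos i).le
  have hcol : ∀ j, ∑ i, |A i j| * hh i ≤ C * hh j := by
    intro j
    calc ∑ i, |A i j| * hh i = ∑ i, |A j i| * hh i :=
          Finset.sum_congr rfl fun i _ => by rw [hsymA]
      _ ≤ C * hh j := hrow j
  have hnorm := schur_norm A hh hhpos C hC0 hrow hcol
  have hsqpow : Real.sqrt (α ^ ℓ) = Real.sqrt α ^ ℓ := by
    rw [show α ^ ℓ = (Real.sqrt α ^ 2) ^ ℓ by rw [Real.sq_sqrt hα0], ← pow_mul, mul_comm,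
      pow_mul]
    exact Real.sqrt_sq (pow_nonneg (Real.sqrt_nonneg α) ℓ)
  rw [show ((ℓ : ℝ) + 1) * L * Real.sqrt (α ^ ℓ) = C by rw [hCdef, hsqpow]]
  exact hnorm

end AuxProof

/-- Suppose `G` is `ℓ`-tangle-free, for every cycle `𝒞` the number of vertices at
distance `t ≤ ℓ` from `𝒞` is at most `L·α^t`, and the sets `V_𝒞 = {v | d(v,𝒞) ≤ ℓ}` are
pairwise disjoint over distinct cycles. Then `ρ(B^(ℓ) - D^(ℓ)) ≤ (ℓ+1)·L·α^(ℓ/2)`. -/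
theorem specRad_pathCount_sub_dist_le {V : Type*} [Fintype V] [DecidableEq V]
    (G : SimpleGraph V) (ℓ : ℕ) (hℓ : 1 ≤ ℓ) (α L : ℝ) (hα : 1 ≤ α) (hL : 0 < L)
    (htf : TangleFree G ℓ)
    (hgrowth : ∀ (a : V) (c : G.Walk a a), c.IsCycle → ∀ t ≤ ℓ,
      ({v : V | edistToSet G {w | w ∈ c.support} v = (t : ℕ∞)}.ncard : ℝ) ≤ L * α ^ t)
    (hdisj : ∀ (a b : V) (c₁ : G.Walk a a) (c₂ : G.Walk b b),
      c₁.IsCycle → c₂.IsCycle → c₁.edges.toFinset ≠ c₂.edges.toFinset →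
      Disjoint {v : V | edistToSet G {w | w ∈ c₁.support} v ≤ (ℓ : ℕ∞)}
        {v : V | edistToSet G {w | w ∈ c₂.support} v ≤ (ℓ : ℕ∞)}) :
    specRad (Matrix.of fun i j : V =>
        (pathCount G ℓ i j : ℝ) - (if G.edist i j = (ℓ : ℕ∞) then 1 else 0)) ≤
      ((ℓ : ℝ) + 1) * L * Real.sqrt (α ^ ℓ) := by
  unfold specRad
  exact aux_main G ℓ hℓ α L hα hL hgrowth hdisj
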